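/- Let v ∈ ℝ⁴ be a stationary distribution of M(p,q) (vᵀM = vᵀ, v₁+v₂+v₃+v₄ = 1) whose left-kernel of M−I is one-dimensional, and suppose D(p,q,𝟙) ≠ 0. Then for every f ∈ ℝ⁴, v·f = D(p,q,f)/D(p,q,𝟙). -/

import Mathlib

open Matrix

def ipdMatrix (p q : Fin 4 → ℝ) : Matrix (Fin 4) (Fin 4) ℝ :=
  !![p 0 * q 0, p 0 * (1 - q 0), (1 - p 0) * q 0, (1 - p 0) * (1 - q 0);
     p 1 * q 2, p 1 * (1 - q 2), (1 - p 1) * q 2, (1 - p 1) * (1 - q 2);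
     p 2 * q 1, p 2 * (1 - q 1), (1 - p 2) * q 1, (1 - p 2) * (1 - q 1);
     p 3 * q 3, p 3 * (1 - q 3), (1 - p 3) * q 3, (1 - p 3) * (1 - q 3)]

def pdMatrix (p q f : Fin 4 → ℝ) : Matrix (Fin 4) (Fin 4) ℝ :=
  !![p 0 * q 0 - 1, p 0 - 1, q 0 - 1, f 0;
     p 1 * q 2,     p 1 - 1, q 2,     f 1;
     p 2 * q 1,     p 2,     q 1 - 1, f 2;
     p 3 * q 3,     p 3,     q 3,     f 3]

set_option maxHeartbeats 1000000 in
private lemma detFour (A : Matrix (Fin 4) (Fin 4) ℝ) : A.det =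
    A 0 0*A 1 1*A 2 2*A 3 3 - A 0 0*A 1 1*A 2 3*A 3 2 - A 0 0*A 1 2*A 2 1*A 3 3 + A 0 0*A 1 2*A 2 3*A 3 1 + A 0 0*A 1 3*A 2 1*A 3 2 - A 0 0*A 1 3*A 2 2*A 3 1 - A 0 1*A 1 0*A 2 2*A 3 3 + A 0 1*A 1 0*A 2 3*A 3 2 + A 0 1*A 1 2*A 2 0*A 3 3 - A 0 1*A 1 2*A 2 3*A 3 0 - A 0 1*A 1 3*A 2 0*A 3 2 + A 0 1*A 1 3*A 2 2*A 3 0 + A 0 2*A 1 0*A 2 1*A 3 3 - A 0 2*A 1 0*A 2 3*A 3 1 - A 0 2*A 1 1*A 2 0*A 3 3 + A 0 2*A 1 1*A 2 3*A 3 0 + A 0 2*A 1 3*A 2 0*A 3 1 - A 0 2*A 1 3*A 2 1*A 3 0 - A 0 3*A 1 0*A 2 1*A 3 2 + A 0 3*A 1 0*A 2 2*A 3 1 + A 0 3*A 1 1*A 2 0*A 3 2 - A 0 3*A 1 1*A 2 2*A 3 0 - A 0 3*A 1 2*A 2 0*A 3 1 + A 0 3*A 1 2*A 2 1*A 3 0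 := by
  rw [Matrix.det_succ_row_zero]
  simp [Fin.sum_univ_succ, Matrix.det_fin_three, Fin.succAbove]
  ring

private lemma oneFinFour : (1 : Matrix (Fin 4) (Fin 4) ℝ) =
    !![1,0,0,0; 0,1,0,0; 0,0,1,0; 0,0,0,1] := by
  ext i j
  fin_cases i <;> fin_cases j <;> simp [Matrix.one_apply, Matrix.vecHead, Matrix.vecTail]

set_option maxHeartbeats 1600000 in
/-- Press–Dyson formula: for a stationary distribution v of M(p,q) with
one-dimensional left kernel of M − I and D(p,q,𝟙) ≠ 0, one has
v·f = D(p,q,f)/D(p,q,𝟙). -/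
theorem stationary_dot_eq_det_ratio (p q v : Fin 4 → ℝ)
    (hstat : v ᵥ* ipdMatrix p q = v)
    (hsum : ∑ i, v i = 1)
    (hker : ∀ w : Fin 4 → ℝ, w ᵥ* (ipdMatrix p q - 1) = 0 → ∃ c : ℝ, w = c • v)
    (hD : (pdMatrix p q (fun _ => 1)).det ≠ 0) :
    ∀ f : Fin 4 → ℝ,
      v ⬝ᵥ f = (pdMatrix p q f).det / (pdMatrix p q (fun _ => 1)).det := by
  intro f
  set W : Fin 4 → ℝ := ![- (p 1 * q 2)*(p 2)*(q 3) + (p 1 * q 2)*(q 1 - 1)*(p 3) + (p 1 - 1)*(p 2 * q 1)*(q 3) - (p 1 - 1)*(q 1 - 1)*(p 3 * q 3) - (q 2)*(p 2 * q 1)*(p 3) + (q 2)*(p 2)*(p 3 * q 3), (p 0 * q 0 - 1)*(p 2)*(q 3) - (p 0 * q 0 - 1)*(q 1 - 1)*(p 3) - (p 0 - 1)*(p 2 * q 1)*(q 3) + (p 0 - 1)*(q 1 - 1)*(p 3 * q 3) + (q 0 - 1)*(p 2 * q 1)*(p 3) - (q 0 - 1)*(p 2)*(p 3 * q 3), - (p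 0 * q 0 - 1)*(p 1 - 1)*(q 3) + (p 0 * q 0 - 1)*(q 2)*(p 3) + (p 0 - 1)*(p 1 * q 2)*(q 3) - (p 0 - 1)*(q 2)*(p 3 * q 3) - (q 0 - 1)*(p 1 * q 2)*(p 3) + (q 0 - 1)*(p 1 - 1)*(p 3 * q 3), (p 0 * q 0 - 1)*(p 1 - 1)*(q 1 - 1) - (p 0 * q 0 - 1)*(q 2)*(p 2) - (p 0 - 1)*(p 1 * q 2)*(q 1 - 1) + (p 0 - 1)*(q 2)*(p 2 * q 1) + (q 0 - 1)*(p 1 * q 2)*(p 2) - (q 0 - 1)*(p 1 - 1)*(p 2 * q 1)] with hW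
  have hlin : ∀ g : Fin 4 → ℝ, (pdMatrix p q g).det =
      g 0 * W 0 + g 1 * W 1 + g 2 * W 2 + g 3 * W 3 := by
    intro g
    simp only [hW, pdMatrix, detFour, Matrix.cons_val', Matrix.cons_val_zero,
      Matrix.cons_val_one, Matrix.head_cons, Matrix.empty_val', Matrix.cons_val_fin_one,
      Matrix.head_fin_const, Matrix.of_apply, Matrix.cons_val_two, Matrix.cons_val_three,
      Matrix.tail_cons]
    ring
  have e0 : (W ᵥ* (ipdMatrix p q - 1)) 0 = 0 := by
    simp only [hW, Matrix.vecMul, dotProduct, Fin.sum_univ_four, Matrix.sub_apply,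
      oneFinFour, ipdMatrix, Matrix.cons_val', Matrix.cons_val_zero,
      Matrix.cons_val_one, Matrix.head_cons, Matrix.empty_val', Matrix.cons_val_fin_one,
      Matrix.head_fin_const, Matrix.of_apply, Matrix.cons_val_two, Matrix.cons_val_three,
      Matrix.tail_cons]
    ring
  have e1 : (W ᵥ* (ipdMatrix p q - 1)) 1 = 0 := by
    simp only [hW, Matrix.vecMul, dotProduct, Fin.sum_univ_four, Matrix.sub_apply,
      oneFinFour, ipdMatrix, Matrix.cons_val', Matrix.cons_val_zero,
      Matrix.cons_val_one, Matrix.head_cons, Matrix.empty_val', Matrix.cons_val_fin_one,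
      Matrix.head_fin_const, Matrix.of_apply, Matrix.cons_val_two, Matrix.cons_val_three,
      Matrix.tail_cons]
    ring
  have e2 : (W ᵥ* (ipdMatrix p q - 1)) 2 = 0 := by
    simp only [hW, Matrix.vecMul, dotProduct, Fin.sum_univ_four, Matrix.sub_apply,
      oneFinFour, ipdMatrix, Matrix.cons_val', Matrix.cons_val_zero,
      Matrix.cons_val_one, Matrix.head_cons, Matrix.empty_val', Matrix.cons_val_fin_one,
      Matrix.head_fin_const, Matrix.of_apply, Matrix.cons_val_two, Matrix.cons_val_three,
      Matrix.tail_cons]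
    ring
  have e3 : (W ᵥ* (ipdMatrix p q - 1)) 3 = 0 := by
    simp only [hW, Matrix.vecMul, dotProduct, Fin.sum_univ_four, Matrix.sub_apply,
      oneFinFour, ipdMatrix, Matrix.cons_val', Matrix.cons_val_zero,
      Matrix.cons_val_one, Matrix.head_cons, Matrix.empty_val', Matrix.cons_val_fin_one,
      Matrix.head_fin_const, Matrix.of_apply, Matrix.cons_val_two, Matrix.cons_val_three,
      Matrix.tail_cons]
    ring
  have hw0 : W ᵥ* (ipdMatrix p q - 1) = 0 := by
    funext j
    fin_cases j
    exacts [e0, e1, e2, e3]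
  obtain ⟨c, hc⟩ := hker W hw0
  have hsum4 : v 0 + v 1 + v 2 + v 3 = 1 := by
    simpa [Fin.sum_univ_four] using hsum
  have hDone : (pdMatrix p q (fun _ => 1)).det = c := by
    rw [hlin]
    simp only [hc, Pi.smul_apply, smul_eq_mul]
    linear_combination c * hsum4
  have hcne : c ≠ 0 := hDone ▸ hD
  rw [hlin f, hDone, eq_div_iff hcne]
  simp only [hc, Pi.smul_apply, smul_eq_mul, dotProduct, Fin.sum_univ_four]
  ring
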